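/- Let G be a Polish group, K a compact normal subgroup of G, and α a continuous action of G on a Polish space X. Then the set O of K-orbits {[x]_K : x ∈ X} is a Borel subset of the hyperspace K(X) of compact subsets of X with the Vietoris topology, and the map x ↦ [x]_K is continuous from X to K(X). -/

import Mathlib

open TopologicalSpace Metric Set

/-- for a continuous action of a Polish group `G` on a Polish space `X` and a
compact normal subgroup `K ≤ G`, the map sending `x` to its `K`-orbit is continuous into
the hyperspace of nonempty compact subsets of `X` (Vietoris topology), and the set of
`K`-orbits is Borel in this hyperspace. -/
theorem stmt_13 (G : Type*) [Group G] [TopologicalSpace G] [IsTopologicalGroup G]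
    [PolishSpace G] (X : Type*) [MetricSpace X] [PolishSpace X]
    [MulAction G X] [ContinuousSMul G X]
    (K : Subgroup G) [K.Normal] (hK : IsCompact (K : Set G)) :
    ∃ f : X → NonemptyCompacts X,
      (∀ x, (f x : Set X) = {y | ∃ k ∈ K, k • x = y}) ∧
      Continuous f ∧
      @MeasurableSet (NonemptyCompacts X) (borel _) (Set.range f) := by
  set f : X → NonemptyCompacts X := fun x =>
    ⟨⟨(fun k : G => k • x) '' (K : Set G),
      hK.image (continuous_id.smul continuous_const)⟩,
      ⟨x, ⟨1, K.one_mem, one_smul G x⟩⟩⟩ with hf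
  have hprop : ∀ x, (f x : Set X) = {y | ∃ k ∈ K, k • x = y} := by
    intro x
    ext y
    show y ∈ (fun k : G => k • x) '' (K : Set G) ↔ _
    simp [hf, Set.mem_image]
  -- orbit invariance
  have horb : ∀ (x : X) (k : G), k ∈ K → f (k • x) = f x := by
    intro x k hk
    apply NonemptyCompacts.ext
    rw [hprop, hprop]
    ext y
    constructor
    · rintro ⟨k', hk', rfl⟩
      exact ⟨k' * k, K.mul_mem hk' hk, (mul_smul k' k x)⟩
    · rintro ⟨m, hm, rfl⟩
      refine ⟨m * k⁻¹, K.mul_mem hm (K.inv_mem hk), ?_⟩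
      rw [smul_smul, mul_assoc, inv_mul_cancel, mul_one]
  -- continuity
  have hcont : Continuous f := by
    rw [continuous_iff_continuousAt]
    intro x₀
    rw [Metric.continuousAt_iff]
    intro ε hε
    obtain ⟨v, hv, h⟩ := hK.mem_uniformity_of_prod
      (f := fun (x : X) (k : G) => k • x) (s := (univ : Set X)) (q := x₀)
      (u := {p : X × X | dist p.1 p.2 < ε / 2})
      ((continuous_snd.smul continuous_fst).continuousOn) (mem_univ _)
      (dist_mem_uniformity (half_pos hε))
    rw [nhdsWithin_univ] at hv
    obtain ⟨δ, hδ, hball⟩ := Metric.mem_nhds_iff.1 hv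
    refine ⟨δ, hδ, fun {x} hx => ?_⟩
    have hx' : x ∈ v := hball hx
    have key : ∀ k ∈ (K : Set G), dist (k • x) (k • x₀) < ε / 2 := fun k hk => h x hx' k hk
    have hHd : hausdorffDist (f x : Set X) (f x₀ : Set X) ≤ ε / 2 := by
      apply hausdorffDist_le_of_mem_dist (by linarith)
      · rintro y hy
        rw [hprop] at hy
        obtain ⟨k, hk, rfl⟩ := hy
        refine ⟨k • x₀, ?_, (key k hk).le⟩
        rw [hprop]; exact ⟨k, hk, rfl⟩
      · rintro y hy
        rw [hprop] at hy
        obtain ⟨k, hk, rfl⟩ := hy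
        refine ⟨k • x, ?_, ?_⟩
        · rw [hprop]; exact ⟨k, hk, rfl⟩
        · rw [dist_comm]; exact (key k hk).le
    calc dist (f x) (f x₀) = hausdorffDist (f x : Set X) (f x₀ : Set X) :=
          NonemptyCompacts.dist_eq
      _ ≤ ε / 2 := hHd
      _ < ε := by linarith
  refine ⟨f, hprop, hcont, ?_⟩
  -- the range is closed
  have hclosed : IsClosed (Set.range f) := by
    apply IsSeqClosed.isClosed
    intro u C hu hC
    choose xs hxs using hu
    obtain ⟨x, hx⟩ := C.nonempty
    have hyn : ∀ n, ∃ y ∈ (u n : Set X), infDist x (u n) = dist x y := fun n =>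
      (u n).isCompact.exists_infDist_eq_dist (u n).nonempty x
    choose y hy hyd using hyn
    have h1 : Filter.Tendsto (fun n => infDist x (u n)) Filter.atTop
        (nhds (infDist x C)) := ((lipschitz_infDist_set x).continuous.tendsto C).comp hC
    have h2 : infDist x (C : Set X) = 0 := infDist_zero_of_mem hx
    have h3 : Filter.Tendsto (fun n => dist x (y n)) Filter.atTop (nhds 0) := by
      rw [h2] at h1
      simpa [fun n => (hyd n).symm] using h1
    have hxy : Filter.Tendsto y Filter.atTop (nhds x) := by
      rw [tendsto_iff_dist_tendsto_zero]
      simpa [dist_comm] using h3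
    have hfy : ∀ n, f (y n) = u n := by
      intro n
      have hmem := hy n
      rw [← hxs n, hprop] at hmem
      obtain ⟨k, hk, hky⟩ := hmem
      rw [← hky, horb _ k hk, hxs n]
    have h4 : Filter.Tendsto (fun n => f (y n)) Filter.atTop (nhds (f x)) :=
      (hcont.tendsto x).comp hxy
    have h5 : C = f x := tendsto_nhds_unique hC (by simpa [hfy] using h4)
    exact ⟨x, h5.symm⟩
  letI : MeasurableSpace (NonemptyCompacts X) := borel _
  haveI : BorelSpace (NonemptyCompacts X) := ⟨rfl⟩
  exact hclosed.measurableSet
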